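/- (Proposition 3) Let p be a prime, s a natural number, G = p^s, and let M_p and n_d be positive integers. Let g₁ ≤ g₂ ≤ … ≤ g_{n_d} be positive integers arranged in ascending order, each dividing G, such that Σ_{i=1}^{n_d} 1/g_i = M_p (equivalently Σ_{i=1}^{n_d} G/g_i = G·M_p). Then there exist a column assignment col : {1,…,n_d} → {1,…,M_p} and residues r₁, …, r_{n_d} with 0 ≤ r_i < g_i, such that for every pair (q, j) with q ∈ {0,…,G−1} and j ∈ {1,…,M_p} there is exactly one index i with col(i) = j and q ≡ r_i (mod g_i). That is, a G×M_p training sequence matrix C can be constructed in which training signal i occupies exactly the cells in column col(i) whose row indices are congruent to r_i modulo g_i, and every cell of C is filled by exactly one training signal. -/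

import Mathlib

namespace TSCaux

def rev (p : ℕ) : ℕ → ℕ → ℕ
  | 0, _ => 0
  | t+1, a => rev p t (a / p) + (a % p) * p ^ t

lemma rev_lt (p : ℕ) (hp : 0 < p) : ∀ (t a : ℕ), rev p t a < p ^ t
  | 0, a => by simp [rev]
  | t+1, a => by
    have h1 := rev_lt p hp t (a / p)
    have h2 : a % p < p := Nat.mod_lt _ hp
    simp only [rev]
    calc rev p t (a / p) + (a % p) * p ^ t < p ^ t + (a % p) * p ^ t := by omega
    _ = (1 + a % p) * p ^ t := by ring
    _ ≤ p * p ^ t := Nat.mul_le_mul_right _ (by omega)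
    _ = p ^ (t + 1) := by ring

lemma rev_split (p : ℕ) : ∀ (t u q : ℕ),
    rev p (t + u) q = rev p u (q / p ^ t) + rev p t (q % p ^ t) * p ^ u
  | 0, u, q => by simp [rev]
  | t+1, u, q => by
    have e : t + 1 + u = (t + u) + 1 := by omega
    rw [e]
    simp only [rev]
    rw [rev_split p t u (q / p)]
    have h1 : q / p / p ^ t = q / p ^ (t + 1) := by
      rw [Nat.div_div_eq_div_mul, ← pow_succ']
    have h2 : (q / p) % p ^ t = q % p ^ (t + 1) / p := by
      rw [← Nat.mod_mul_right_div_self, ← pow_succ']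
    have h3 : q % p ^ (t + 1) % p = q % p :=
      Nat.mod_mod_of_dvd _ (dvd_pow_self p (Nat.succ_ne_zero t))
    rw [h1, h2, h3]
    ring

lemma rev_one (p a : ℕ) : rev p 1 a = a % p := by simp [rev]

lemma rev_rev (p : ℕ) (hp : 0 < p) : ∀ (t a : ℕ), a < p ^ t → rev p t (rev p t a) = a := by
  intro t
  induction t with
  | zero => intro a ha; simp only [pow_zero, Nat.lt_one_iff] at ha; simp [rev, ha]
  | succ t ih =>
    intro a ha
    have hsplit := rev_split p t 1 a
    have hd : a / p ^ t < p := by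
      rw [Nat.div_lt_iff_lt_mul (pow_pos hp t)]
      calc a < p ^ (t + 1) := ha
      _ = p * p ^ t := by ring
    have hc : rev p t (a % p ^ t) < p ^ t := rev_lt p hp t _
    have e1 : rev p (t + 1) a = a / p ^ t + rev p t (a % p ^ t) * p := by
      rw [hsplit, rev_one, pow_one, Nat.mod_eq_of_lt hd]
    rw [e1]
    show rev p t ((a / p ^ t + rev p t (a % p ^ t) * p) / p)
        + ((a / p ^ t + rev p t (a % p ^ t) * p) % p) * p ^ t = a
    have h4 : (a / p ^ t + rev p t (a % p ^ t) * p) / p = rev p t (a % p ^ t) := by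
      rw [Nat.add_mul_div_right _ _ hp, Nat.div_eq_of_lt hd, Nat.zero_add]
    have h5 : (a / p ^ t + rev p t (a % p ^ t) * p) % p = a / p ^ t := by
      rw [Nat.add_mul_mod_self_right, Nat.mod_eq_of_lt hd]
    rw [h4, h5, ih (a % p ^ t) (Nat.mod_lt _ (pow_pos hp t))]
    exact Nat.mod_add_div' a (p ^ t)

end TSCaux

/-- (Proposition 3) For G = p^s and divisors g₁ ≤ … ≤ g_{n_d} of G with
Σ G/gᵢ = G·M_p, a G×M_p training sequence matrix can be constructed: there are
column assignments and residues such that every cell (q, j) is filled by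
exactly one training signal i with col(i) = j and q ≡ rᵢ (mod gᵢ). -/
theorem training_sequence_construction_of_prime_power
    (p : ℕ) (hp : p.Prime) (s : ℕ) (G : ℕ) (hG : G = p ^ s)
    (Mp nd : ℕ) (hMp : 0 < Mp) (hnd : 0 < nd)
    (g : Fin nd → ℕ)
    (hpos : ∀ i, 1 ≤ g i)
    (hmono : ∀ i j : Fin nd, i ≤ j → g i ≤ g j)
    (hdvd : ∀ i, g i ∣ G)
    (hsum : ∑ i, G / g i = G * Mp) :
    ∃ (col : Fin nd → Fin Mp) (r : Fin nd → ℕ),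
      (∀ i, r i < g i) ∧
      ∀ (q : ℕ) (j : Fin Mp), q < G →
        ∃! i : Fin nd, col i = j ∧ q % g i = r i := by
  subst hG
  have hp1 : 0 < p := hp.pos
  have hG0 : 0 < p ^ s := pow_pos hp1 s
  choose t ht hgt using fun i => (Nat.dvd_prime_pow hp).mp (hdvd i)
  -- block lengths and their partial sums
  set L' : ℕ → ℕ := fun k => if h : k < nd then p ^ (s - t ⟨k, h⟩) else 0 with hL'def
  set S : ℕ → ℕ := fun k => ∑ m ∈ Finset.range k, L' m with hSdef
  have hLk : ∀ i : Fin nd, L' i.val = p ^ (s - t i) := by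
    intro i
    simp only [hL'def]
    rw [dif_pos i.isLt]
  have hL : ∀ i, p ^ s / g i = p ^ (s - t i) := by
    intro i; rw [hgt i]; exact Nat.pow_div (ht i) hp1
  have hS0 : S 0 = 0 := by simp [hSdef]
  have hSnd : S nd = p ^ s * Mp := by
    rw [← hsum]
    simp only [hSdef]
    rw [← Fin.sum_univ_eq_sum_range L' nd]
    exact Finset.sum_congr rfl fun i _ => by rw [hLk i, ← hL i]
  have hSstep : ∀ i : Fin nd, S (i.val + 1) = S i.val + p ^ (s - t i) := by
    intro i
    simp only [hSdef]
    rw [Finset.sum_range_succ, hLk i]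
  have hSmono : Monotone S := fun a b hab =>
    Finset.sum_le_sum_of_subset (Finset.range_subset_range.mpr hab)
  have htmono : ∀ i k : Fin nd, k ≤ i → t k ≤ t i := by
    intro i k hki
    have h := hmono k i hki
    rw [hgt k, hgt i] at h
    exact (Nat.pow_le_pow_iff_right hp.one_lt).mp h
  have hSdvd : ∀ i : Fin nd, p ^ (s - t i) ∣ S i.val := by
    intro i
    apply Finset.dvd_sum
    intro m hm
    have hm' : m < nd := lt_trans (Finset.mem_range.mp hm) i.isLt
    have hle : (⟨m, hm'⟩ : Fin nd) ≤ i := by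
      simp only [Fin.le_def]
      exact le_of_lt (Finset.mem_range.mp hm)
    rw [show L' m = p ^ (s - t ⟨m, hm'⟩) from hLk ⟨m, hm'⟩]
    exact pow_dvd_pow p (by have := htmono i ⟨m, hm'⟩ hle; omega)
  have hLG : ∀ i : Fin nd, p ^ (s - t i) ∣ p ^ s := fun i => pow_dvd_pow p (Nat.sub_le s (t i))
  have hLpos : ∀ i : Fin nd, 0 < p ^ (s - t i) := fun i => pow_pos hp1 _
  have hSlt : ∀ i : Fin nd, S i.val + p ^ (s - t i) ≤ p ^ s * Mp := by
    intro i
    rw [← hSstep i, ← hSnd]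
    exact hSmono i.isLt
  have hcolb : ∀ i : Fin nd, S i.val / p ^ s < Mp := by
    intro i
    rw [Nat.div_lt_iff_lt_mul hG0, mul_comm]
    have h1 := hSlt i
    have h2 := hLpos i
    omega
  refine ⟨fun i => ⟨S i.val / p ^ s, hcolb i⟩,
    fun i => TSCaux.rev p (t i) ((S i.val % p ^ s) / p ^ (s - t i)), ?_, ?_⟩
  · intro i
    rw [hgt i]
    exact TSCaux.rev_lt p hp1 _ _
  · intro q j hq
    set Rq := TSCaux.rev p s q with hRq
    have hRqlt : Rq < p ^ s := TSCaux.rev_lt p hp1 s q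
    set x := j.val * p ^ s + Rq with hx
    have hxlt : x < p ^ s * Mp := by
      have hj : j.val + 1 ≤ Mp := j.isLt
      calc x < j.val * p ^ s + p ^ s := by omega
      _ = (j.val + 1) * p ^ s := by ring
      _ ≤ Mp * p ^ s := Nat.mul_le_mul_right _ hj
      _ = p ^ s * Mp := mul_comm _ _
    -- the characterization
    have hchar : ∀ i : Fin nd,
        ((⟨S i.val / p ^ s, hcolb i⟩ : Fin Mp) = j ∧
          q % g i = TSCaux.rev p (t i) ((S i.val % p ^ s) / p ^ (s - t i)))
        ↔ (S i.val ≤ x ∧ x < S i.val + p ^ (s - t i)) := by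
      intro i
      have hu : t i + (s - t i) = s := by have := ht i; omega
      have hfact : p ^ (s - t i) * p ^ (t i) = p ^ s := by
        rw [← pow_add]; congr 1; omega
      have hDmL : p ^ (s - t i) ∣ S i.val % p ^ s :=
        (Nat.dvd_mod_iff (hLG i)).mpr (hSdvd i)
      have haL : (S i.val % p ^ s) / p ^ (s - t i) * p ^ (s - t i) = S i.val % p ^ s :=
        Nat.div_mul_cancel hDmL
      have hDmlt : S i.val % p ^ s < p ^ s := Nat.mod_lt _ hG0
      have ha : (S i.val % p ^ s) / p ^ (s - t i) < p ^ (t i) := by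
        rw [Nat.div_lt_iff_lt_mul (hLpos i)]
        calc S i.val % p ^ s < p ^ s := hDmlt
        _ = p ^ (t i) * p ^ (s - t i) := by rw [← pow_add]; congr 1; omega
      have step1 : q % g i = TSCaux.rev p (t i) ((S i.val % p ^ s) / p ^ (s - t i)) ↔
          TSCaux.rev p (t i) (q % p ^ (t i)) = (S i.val % p ^ s) / p ^ (s - t i) := by
        rw [hgt i]
        constructor
        · intro h; rw [h]; exact TSCaux.rev_rev p hp1 (t i) _ ha
        · intro h
          rw [← h]
          exact (TSCaux.rev_rev p hp1 (t i) _ (Nat.mod_lt q (pow_pos hp1 _))).symm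
      have step2 : Rq / p ^ (s - t i) = TSCaux.rev p (t i) (q % p ^ (t i)) := by
        have hsplit := TSCaux.rev_split p (t i) (s - t i) q
        rw [hu] at hsplit
        rw [hRq, hsplit, Nat.add_mul_div_right _ _ (hLpos i),
          Nat.div_eq_of_lt (TSCaux.rev_lt p hp1 _ _), Nat.zero_add]
      have step3 : Rq / p ^ (s - t i) = (S i.val % p ^ s) / p ^ (s - t i) ↔
          (S i.val % p ^ s ≤ Rq ∧ Rq < S i.val % p ^ s + p ^ (s - t i)) := by
        constructor
        · intro h
          constructor
          · rw [← haL, ← h]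
            exact Nat.div_mul_le_self _ _
          · have hmod : Rq % p ^ (s - t i) < p ^ (s - t i) := Nat.mod_lt _ (hLpos i)
            have hdm := Nat.mod_add_div' Rq (p ^ (s - t i))
            have hle : Rq < Rq / p ^ (s - t i) * p ^ (s - t i) + p ^ (s - t i) := by omega
            calc Rq < Rq / p ^ (s - t i) * p ^ (s - t i) + p ^ (s - t i) := hle
            _ = S i.val % p ^ s + p ^ (s - t i) := by rw [h, haL]
        · intro ⟨h1, h2⟩
          apply Nat.div_eq_of_lt_le
          · omega
          · calc Rq < S i.val % p ^ s + p ^ (s - t i) := h2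
            _ = ((S i.val % p ^ s) / p ^ (s - t i) + 1) * p ^ (s - t i) := by
              rw [add_mul, one_mul, haL]
      have E1 : ((⟨S i.val / p ^ s, hcolb i⟩ : Fin Mp) = j) ↔ S i.val / p ^ s = j.val :=
        Fin.ext_iff
      constructor
      · rintro ⟨h1, h2⟩
        have h1' : S i.val / p ^ s = j.val := E1.mp h1
        have h2' : S i.val % p ^ s ≤ Rq ∧ Rq < S i.val % p ^ s + p ^ (s - t i) :=
          step3.mp (step2.trans (step1.mp h2))
        have hD := Nat.div_add_mod (S i.val) (p ^ s)
        rw [h1'] at hD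
        have hco : p ^ s * j.val = j.val * p ^ s := mul_comm _ _
        omega
      · rintro ⟨h1, h2⟩
        obtain ⟨c, hc⟩ := hSdvd i
        have hcc : c * p ^ (s - t i) = S i.val := by rw [mul_comm]; exact hc.symm
        have hxdiv : x / p ^ (s - t i) = c := by
          apply Nat.div_eq_of_lt_le
          · omega
          · have he : (c + 1) * p ^ (s - t i) = c * p ^ (s - t i) + p ^ (s - t i) := by ring
            omega
        have hDdiv : S i.val / p ^ (s - t i) = c := by
          rw [hc, Nat.mul_div_cancel_left _ (hLpos i)]
        have hxG : x / p ^ s = S i.val / p ^ s := by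
          rw [← hfact, ← Nat.div_div_eq_div_mul, ← Nat.div_div_eq_div_mul, hxdiv, hDdiv]
        have hx' : x = p ^ s * j.val + Rq := by rw [hx, Nat.mul_comm]
        have hxj : x / p ^ s = j.val := by
          rw [hx', Nat.mul_add_div hG0, Nat.div_eq_of_lt hRqlt, add_zero]
        have h1' : S i.val / p ^ s = j.val := by rw [← hxG, hxj]
        have hD := Nat.div_add_mod (S i.val) (p ^ s)
        have hX := Nat.div_add_mod x (p ^ s)
        rw [h1'] at hD
        rw [hxj] at hX
        refine ⟨E1.mpr h1', step1.mpr (step2.symm.trans (step3.mpr ⟨?_, ?_⟩))⟩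
        · have hco : p ^ s * j.val = j.val * p ^ s := mul_comm _ _
          omega
        · have hco : p ^ s * j.val = j.val * p ^ s := mul_comm _ _
          omega
    -- find the unique interval containing x
    set k0 := Nat.findGreatest (fun m => S m ≤ x) (nd - 1) with hk0def
    have hk0le : k0 ≤ nd - 1 := Nat.findGreatest_le _
    have hk0nd : k0 < nd := by omega
    have hk0 : S k0 ≤ x := by
      rw [hk0def]
      exact Nat.findGreatest_spec (P := fun m => S m ≤ x) (Nat.zero_le _)
        (by show S 0 ≤ x; omega)
    have hk1 : x < S (k0 + 1) := by
      by_cases hcase : k0 + 1 ≤ nd - 1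
      · have hgr := Nat.findGreatest_is_greatest (P := fun m => S m ≤ x)
          (n := nd - 1) (k := k0 + 1) (by omega) hcase
        have hgr' : ¬ S (k0 + 1) ≤ x := hgr
        omega
      · have he : k0 + 1 = nd := by omega
        rw [he, hSnd]; exact hxlt
    refine ⟨⟨k0, hk0nd⟩, ?_, ?_⟩
    · apply (hchar ⟨k0, hk0nd⟩).mpr
      refine ⟨hk0, ?_⟩
      have := hSstep ⟨k0, hk0nd⟩
      simp only [Fin.val_mk] at this ⊢
      omega
    · intro y hy
      have hyiv := (hchar y).mp hy
      have hys := hSstep y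
      rcases lt_trichotomy y.val k0 with h | h | h
      · exfalso
        have h1 : S (y.val + 1) ≤ S k0 := hSmono (by omega)
        omega
      · exact Fin.ext h
      · exfalso
        have h1 : S (k0 + 1) ≤ S y.val := hSmono (by omega)
        omega
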